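/- Let ι be a finite nonempty index type and let x, y : ι → ℝ be strictly positive vectors. Then for every real p, the entrywise powers satisfy d_H(x^p, y^p) = |p| · d_H(x, y), where (x^p)_i = x_i^p. -/

import Mathlib

open Finset Real

/-- Hilbert projective metric on strictly positive vectors:
`d_H(x,y) = log (max_i x i / y i) - log (min_i x i / y i)`. -/
noncomputable def dH {ι : Type*} [Fintype ι] [Nonempty ι] (x y : ι → ℝ) : ℝ :=
  Real.log (⨆ i, x i / y i) - Real.log (⨅ i, x i / y i)

lemma ciSup_eq_of_max {ι : Type*} [Fintype ι] [Nonempty ι] (f : ι → ℝ) (a : ι)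
    (ha : ∀ i, f i ≤ f a) : (⨆ i, f i) = f a :=
  le_antisymm (ciSup_le ha) (le_ciSup (Set.Finite.bddAbove (Set.finite_range f)) a)

lemma ciInf_eq_of_min {ι : Type*} [Fintype ι] [Nonempty ι] (f : ι → ℝ) (a : ι)
    (ha : ∀ i, f a ≤ f i) : (⨅ i, f i) = f a :=
  le_antisymm (ciInf_le (Set.Finite.bddBelow (Set.finite_range f)) a) (le_ciInf ha)

/-- the Hilbert projective metric scales under entrywise real powers:
for strictly positive vectors `x, y` and every real `p`,
`d_H(x^p, y^p) = |p| * d_H(x, y)`, where `(x^p) i = x i ^ p`. -/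
theorem dH_rpow {ι : Type*} [Fintype ι] [Nonempty ι]
    (x y : ι → ℝ) (hx : ∀ i, 0 < x i) (hy : ∀ i, 0 < y i) (p : ℝ) :
    dH (fun i => x i ^ p) (fun i => y i ^ p) = |p| * dH x y := by
  set r : ι → ℝ := fun i => x i / y i with hr
  have hrpos : ∀ i, 0 < r i := fun i => div_pos (hx i) (hy i)
  have hdiv : ∀ i, x i ^ p / y i ^ p = r i ^ p := fun i =>
    (Real.div_rpow (hx i).le (hy i).le p).symm
  obtain ⟨a, ha⟩ := Finite.exists_max r
  obtain ⟨b, hb⟩ := Finite.exists_min r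
  have hsup : (⨆ i, r i) = r a := ciSup_eq_of_max r a ha
  have hinf : (⨅ i, r i) = r b := ciInf_eq_of_min r b hb
  rcases le_or_gt 0 p with hp | hp
  · have hsup' : (⨆ i, x i ^ p / y i ^ p) = r a ^ p := by
      have := ciSup_eq_of_max (fun i => r i ^ p) a
        (fun i => Real.rpow_le_rpow (hrpos i).le (ha i) hp)
      simpa [hdiv] using this
    have hinf' : (⨅ i, x i ^ p / y i ^ p) = r b ^ p := by
      have := ciInf_eq_of_min (fun i => r i ^ p) b
        (fun i => Real.rpow_le_rpow (hrpos b).le (hb i) hp)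
      simpa [hdiv] using this
    simp only [dH, hsup', hinf', hsup, hinf, Real.log_rpow (hrpos a),
      Real.log_rpow (hrpos b), abs_of_nonneg hp]
    rw [show (⨆ i, x i / y i) = r a from hsup, show (⨅ i, x i / y i) = r b from hinf]
    ring
  · have hsup' : (⨆ i, x i ^ p / y i ^ p) = r b ^ p := by
      have := ciSup_eq_of_max (fun i => r i ^ p) b
        (fun i => Real.rpow_le_rpow_of_nonpos (hrpos b) (hb i) hp.le)
      simpa [hdiv] using this
    have hinf' : (⨅ i, x i ^ p / y i ^ p) = r a ^ p := by
      have := ciInf_eq_of_min (fun i => r i ^ p) a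
        (fun i => Real.rpow_le_rpow_of_nonpos (hrpos i) (ha i) hp.le)
      simpa [hdiv] using this
    simp only [dH, hsup', hinf', hsup, hinf, Real.log_rpow (hrpos a),
      Real.log_rpow (hrpos b), abs_of_neg hp]
    rw [show (⨆ i, x i / y i) = r a from hsup, show (⨅ i, x i / y i) = r b from hinf]
    ring
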